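/- Let α be an action of a discrete group G on a locally compact Hausdorff space X with more than two points, such that for every compact K ≠ X and every non-empty open U ⊆ X there exists g ∈ G with α_g(K) ⊆ U. Then the induced action σ on A = C₀(X) (σ_g(f) = f ∘ α_g⁻¹) is 1-majorizing: for every non-zero a ∈ A₊, every non-invertible b ∈ A₊ and ε > 0 there exist d ∈ A and g ∈ G with ‖d* σ_g(a) d − b‖ < ε. -/
import Mathlib


open scoped ComplexOrder

open Filter Topology

/-- If every compact `K ≠ X` can be moved into every non-empty open `U` by the
action `α` of `G` on a locally compact Hausdorff space `X` with more than two points, then the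
induced action on `C₀(X)` is `1`-majorizing. Non-invertibility of `b ∈ C₀(X)₊` is expressed by
the non-existence of a quasi-inverse. -/
theorem stmt15 {X G : Type*} [TopologicalSpace X] [LocallyCompactSpace X] [T2Space X] [Group G]
    (hX : ∃ x y z : X, x ≠ y ∧ x ≠ z ∧ y ≠ z)
    (α : G → X ≃ₜ X) (hα : ∀ g h x, α (g * h) x = α g (α h x))
    (htop : ∀ K : Set X, IsCompact K → K ≠ Set.univ → ∀ U : Set X, IsOpen U → U.Nonempty →
      ∃ g : G, ⇑(α g) '' K ⊆ U) :
    ∀ a : ZeroAtInftyContinuousMap X ℂ, (∀ x, 0 ≤ a x) → a ≠ 0 →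
      ∀ b : ZeroAtInftyContinuousMap X ℂ, (∀ x, 0 ≤ b x) →
        ¬ (∃ c : ZeroAtInftyContinuousMap X ℂ, ∀ f, b * c * f = f) →
      ∀ ε : ℝ, 0 < ε →
        ∃ (d : ZeroAtInftyContinuousMap X ℂ) (g : G),
          ‖star d * a.comp (α g).symm.toCocompactMap * d - b‖ < ε := by
  intro a ha ha0 b hb hbni ε hε
  have hreal : ∀ c : ℂ, 0 ≤ c → c = ((c.re : ℝ) : ℂ) := fun c h => by
    rw [Complex.le_def] at h
    exact Complex.ext rfl (by simpa using h.2.symm)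
  have hrnn : ∀ c : ℂ, 0 ≤ c → 0 ≤ c.re := fun c h => (Complex.le_def.mp h).1
  have hnre : ∀ c : ℂ, 0 ≤ c → ‖c‖ = c.re := fun c h => by
    conv_lhs => rw [hreal c h]
    rw [Complex.norm_real, Real.norm_eq_abs, abs_of_nonneg (hrnn c h)]
  have hapos : 0 < ‖a‖ := norm_pos_iff.mpr ha0
  -- the open set U
  set U : Set X := {x | ‖a‖ / 2 < (a x).re} with hUdef
  have hacont : Continuous fun x => (a x).re := Complex.continuous_re.comp (map_continuous a)
  have hUopen : IsOpen U := isOpen_lt continuous_const hacont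
  have hUne : U.Nonempty := by
    by_contra h
    rw [Set.not_nonempty_iff_eq_empty] at h
    have hle : ∀ x, ‖a x‖ ≤ ‖a‖ / 2 := by
      intro x
      rw [hnre _ (ha x)]
      by_contra hlt
      exact Set.eq_empty_iff_forall_notMem.mp h x (by simpa [hUdef] using lt_of_not_ge hlt)
    have : ‖a‖ ≤ ‖a‖ / 2 := by
      rw [← ZeroAtInftyContinuousMap.norm_toBCF_eq_norm]
      exact (BoundedContinuousFunction.norm_le (by positivity)).mpr hle
    linarith
  -- the compact set K
  have hbcont : Continuous fun x => ‖b x‖ := (map_continuous b).norm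
  have hKcompact : ∀ δ : ℝ, 0 < δ → IsCompact {x | δ ≤ ‖b x‖} := by
    intro δ hδ
    have hcl : IsClosed {x | δ ≤ ‖b x‖} :=
      isClosed_le continuous_const hbcont
    have := b.zero_at_infty'
    have hmem : {x | ‖b x‖ < δ} ∈ cocompact X := by
      have : Metric.ball (0 : ℂ) δ ∈ 𝓝 (0 : ℂ) := Metric.ball_mem_nhds _ hδ
      have := b.zero_at_infty' this
      refine Filter.mem_of_superset this ?_
      intro x hx
      simpa [Metric.mem_ball, dist_eq_norm] using hx
    obtain ⟨t, htc, hts⟩ := Filter.mem_cocompact.mp hmem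
    refine htc.of_isClosed_subset hcl ?_
    intro x hx
    by_contra hxt
    exact absurd (hts hxt) (by simp at hx ⊢; linarith [hx])
  set K : Set X := {x | ε / 3 ≤ ‖b x‖} with hKdef
  have hKne : K ≠ Set.univ := by
    intro hKu
    have hXc : CompactSpace X := isCompact_univ_iff.mp (hKu ▸ hKcompact _ (by positivity))
    have hbne : ∀ x, b x ≠ 0 := by
      intro x hx
      have : ε / 3 ≤ ‖b x‖ := by
        have := Set.eq_univ_iff_forall.mp hKu x; exact this
      rw [hx] at this; simp at this; linarith
    refine hbni ⟨⟨⟨fun x => (b x)⁻¹, (map_continuous b).inv₀ hbne⟩, ?_⟩, ?_⟩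
    · rw [Filter.cocompact_eq_bot]; exact tendsto_bot
    · intro f
      ext x
      show b x * (b x)⁻¹ * f x = f x
      rw [mul_inv_cancel₀ (hbne x), one_mul]
  obtain ⟨g₀, hg₀⟩ := htop K (hKcompact _ (by positivity)) hKne U hUopen hUne
  -- the group action facts
  have hone : ∀ x, α 1 x = x := by
    intro x
    have h11 : α 1 (α 1 x) = α 1 x := (hα 1 1 x).symm.trans (by rw [one_mul])
    exact (α 1).injective h11
  have hsymm : ∀ x, (α g₀⁻¹).symm x = α g₀ x := by
    intro x
    apply (α g₀⁻¹).injective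
    rw [Homeomorph.apply_symm_apply]
    rw [← hα g₀⁻¹ g₀ x, inv_mul_cancel, hone]
  -- define d
  set s : X → ℝ := fun x => (a (α g₀ x)).re with hsdef
  set num : X → ℝ := fun x => max ((b x).re - 2 * ε / 3) 0 with hnumdef
  set den : X → ℝ := fun x => max (s x) (‖a‖ / 4) with hdendef
  have hden : ∀ x, 0 < den x := fun x => lt_of_lt_of_le (by positivity) (le_max_right _ _)
  have hnum : ∀ x, 0 ≤ num x := fun x => le_max_right _ _
  have hdcont : Continuous fun x => ((Real.sqrt (num x / den x) : ℝ) : ℂ) := by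
    refine Complex.continuous_ofReal.comp (Real.continuous_sqrt.comp ?_)
    apply Continuous.div
    · exact (Complex.continuous_re.comp ((map_continuous b))).sub continuous_const |>.max
        continuous_const
    · exact ((Complex.continuous_re.comp ((map_continuous a).comp (α g₀).continuous)).max
        continuous_const)
    · exact fun x => (hden x).ne'
  have hd0 : ∀ x, ‖b x‖ < 2 * ε / 3 → ((Real.sqrt (num x / den x) : ℝ) : ℂ) = 0 := by
    intro x hx
    have : (b x).re < 2 * ε / 3 := lt_of_le_of_lt (by rw [← hnre _ (hb x)]) hx
    have hn0 : num x = 0 := max_eq_right (by linarith)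
    simp [hn0]
  have hdz : Tendsto (fun x => ((Real.sqrt (num x / den x) : ℝ) : ℂ)) (cocompact X) (𝓝 0) := by
    have hev : (fun x => ((Real.sqrt (num x / den x) : ℝ) : ℂ)) =ᶠ[cocompact X] 0 := by
      refine Filter.mem_of_superset (Filter.mem_cocompact.mpr
        ⟨{x | 2 * ε / 3 ≤ ‖b x‖}, hKcompact _ (by positivity), subset_rfl⟩) ?_
      intro x hx
      simp only [Set.mem_compl_iff, Set.mem_setOf_eq, not_le] at hx
      exact hd0 x hx
    exact (tendsto_congr' hev).mpr tendsto_const_nhds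
  set d : ZeroAtInftyContinuousMap X ℂ :=
    ⟨⟨fun x => ((Real.sqrt (num x / den x) : ℝ) : ℂ), hdcont⟩, hdz⟩ with hddef
  refine ⟨d, g₀⁻¹, ?_⟩
  have key : ∀ x, ‖(star d * a.comp (α g₀⁻¹).symm.toCocompactMap * d - b) x‖ ≤ 2 * ε / 3 := by
    intro x
    have hval : (star d * a.comp (α g₀⁻¹).symm.toCocompactMap * d - b) x
        = star (d x) * a ((α g₀⁻¹).symm x) * d x - b x := rfl
    rw [hval, hsymm x]
    have hdx : d x = ((Real.sqrt (num x / den x) : ℝ) : ℂ) := rfl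
    have hstar : star (d x) = d x := by rw [hdx, Complex.star_def, Complex.conj_ofReal]
    have hax : a (α g₀ x) = ((s x : ℝ) : ℂ) := hreal _ (ha _)
    have hbx : b x = (((b x).re : ℝ) : ℂ) := hreal _ (hb x)
    set r := Real.sqrt (num x / den x) with hr
    have hsq : r * r = num x / den x := Real.mul_self_sqrt (div_nonneg (hnum x) (hden x).le)
    have hrr : r * s x * r - (b x).re = num x / den x * s x - (b x).re := by
      rw [show r * s x * r = r * r * s x from by ring, hsq]
    rw [hstar, hdx, hax]
    have hcalc : ((r : ℝ) : ℂ) * ((s x : ℝ) : ℂ) * ((r : ℝ) : ℂ) - b x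
        = (((num x / den x * s x - (b x).re : ℝ)) : ℂ) := by
      conv_lhs => rw [hbx]
      rw [← hrr]
      push_cast
      ring
    rw [hcalc, Complex.norm_real, Real.norm_eq_abs, abs_le]
    rcases le_or_gt (b x).re (2 * ε / 3) with hc | hc
    · have hn0 : num x = 0 := max_eq_right (by linarith)
      have hbnn := hrnn _ (hb x)
      rw [hn0, zero_div, zero_mul, zero_sub]
      constructor <;> linarith
    · -- x ∈ K
      have hxK : x ∈ K := by
        rw [hKdef]
        show ε / 3 ≤ ‖b x‖
        rw [hnre _ (hb x)]; linarith
      have hxU : α g₀ x ∈ U := hg₀ ⟨x, hxK, rfl⟩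
      have hsx : ‖a‖ / 2 < s x := hxU
      have hden_eq : den x = s x := max_eq_left (by linarith)
      have hnum_eq : num x = (b x).re - 2 * ε / 3 := max_eq_left (by linarith)
      have hsne : s x ≠ 0 := by linarith
      rw [hden_eq, hnum_eq, div_mul_cancel₀ _ hsne]
      constructor <;> linarith
  have : ‖star d * a.comp (α g₀⁻¹).symm.toCocompactMap * d - b‖ ≤ 2 * ε / 3 := by
    rw [← ZeroAtInftyContinuousMap.norm_toBCF_eq_norm]
    exact (BoundedContinuousFunction.norm_le (by positivity)).mpr key
  linarith
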